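/- Let s ≥ 1, m ≥ 1 and d = s·m. Let F_d and F_m be the d-point and m-point DFT matrices (F_d[j,k] = exp(−2πi·j·k/d), F_m[j,k] = exp(−2πi·j·k/m)), let P be the m×d matrix with P[n, j] = 1 if j = n·s and 0 otherwise (s-fold standard downsampling), let k̂ ∈ ℂ^d, and set A = P · F_d⁻¹ · diag(k̂) · F_d. Then for any σ > 0 and r ∈ ℝ the matrix σ² I_m + r² A Aᴴ is invertible, and for every u ∈ ℂ^m the vector v = Aᴴ (σ² I_m + r² A Aᴴ)⁻¹ u satisfies, for every l ∈ {0,…,d−1} written as l = n + j·m with n ∈ {0,…,m−1} and j ∈ {0,…,s−1}: (F_d v)[l] = conj(k̂[l]) · (F_m u)[n] / ( σ² + (r²/s)·Σ_{i=0}^{s−1} |k̂[n + i·m]|² ). (Closed-form guidance for super resolution: v = F⁻¹( conj(k̂) ⊙_s F_{↓s}(u) / (σ² + r²·(k̂ ⊙ conj(k̂))_{⇓s}) ).) -/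

import Mathlib

open Matrix Complex Finset

lemma two_pi_I_ne : (2 * (Real.pi:ℂ) * Complex.I) ≠ 0 := by
  simp [Real.pi_ne_zero, Complex.I_ne_zero]

lemma charSum {N : ℕ} (hN : 0 < N) (a : ℤ) :
    ∑ k : Fin N, Complex.exp (2 * (Real.pi:ℂ) * Complex.I * a * k / N) =
      if (N:ℤ) ∣ a then (N:ℂ) else 0 := by
  have hN' : (N:ℂ) ≠ 0 := Nat.cast_ne_zero.mpr hN.ne'
  have hζ : ∀ k : Fin N, Complex.exp (2 * (Real.pi:ℂ) * Complex.I * a * k / N)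
      = (Complex.exp (2 * (Real.pi:ℂ) * Complex.I * a / N)) ^ (k:ℕ) := by
    intro k
    rw [← Complex.exp_nat_mul]
    congr 1; ring
  simp_rw [hζ]
  rw [Fin.sum_univ_eq_sum_range (fun k => (Complex.exp (2 * (Real.pi:ℂ) * Complex.I * a / N)) ^ k)]
  by_cases h : (N:ℤ) ∣ a
  · obtain ⟨b, rfl⟩ := h
    have h1 : Complex.exp (2 * (Real.pi:ℂ) * Complex.I * ((N*b : ℤ):ℂ) / N) = 1 := by
      rw [show (2 * (Real.pi:ℂ) * Complex.I * ((N*b : ℤ):ℂ) / N : ℂ) = (b:ℂ) * (2 * Real.pi * Complex.I) by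
        push_cast; field_simp]
      exact Complex.exp_int_mul_two_pi_mul_I b
    push_cast at h1 ⊢
    simp [h1]
  · have hζ1 : Complex.exp (2 * (Real.pi:ℂ) * Complex.I * a / N) ≠ 1 := by
      intro hc
      rw [Complex.exp_eq_one_iff] at hc
      obtain ⟨n, hn⟩ := hc
      apply h
      refine ⟨n, ?_⟩
      have h2 : (a:ℂ) = (N:ℂ) * n := by
        field_simp at hn
        exact mul_left_cancel₀ two_pi_I_ne (by linear_combination (2 * (Real.pi:ℂ) * Complex.I) * hn)
      exact_mod_cast h2
    rw [geom_sum_eq hζ1, ← Complex.exp_nat_mul]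
    have h4 : (N:ℂ) * (2 * (Real.pi:ℂ) * Complex.I * a / N) = (a:ℤ) * (2 * Real.pi * Complex.I) := by
      field_simp
    rw [h4, Complex.exp_int_mul_two_pi_mul_I]
    simp [h]

lemma dftSym {N : ℕ} {F : Matrix (Fin N) (Fin N) ℂ}
    (hF : ∀ j k, F j k =
      Complex.exp (-(2 * (Real.pi : ℂ) * Complex.I) * ((j : ℕ) : ℂ) * ((k : ℕ) : ℂ) / (N : ℂ)))
    (a b : Fin N) : F a b = F b a := by
  rw [hF, hF]; congr 1; ring

lemma dftConjMul {N : ℕ} {F : Matrix (Fin N) (Fin N) ℂ}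
    (hF : ∀ j k, F j k =
      Complex.exp (-(2 * (Real.pi : ℂ) * Complex.I) * ((j : ℕ) : ℂ) * ((k : ℕ) : ℂ) / (N : ℂ)))
    (i a b : Fin N) :
    star (F i a) * F i b
      = Complex.exp (2 * (Real.pi:ℂ) * Complex.I
          * (((((a:ℕ):ℤ) - ((b:ℕ):ℤ)) : ℤ) : ℂ) * ((i:ℕ):ℂ) / (N:ℂ)) := by
  rw [hF, hF]
  rw [show (star (Complex.exp (-(2 * (Real.pi : ℂ) * Complex.I) * ((i:ℕ):ℂ) * ((a:ℕ):ℂ) / (N:ℂ))) : ℂ)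
      = Complex.exp (2 * (Real.pi : ℂ) * Complex.I * ((i:ℕ):ℂ) * ((a:ℕ):ℂ) / (N:ℂ)) from ?_]
  · rw [← Complex.exp_add]
    congr 1
    push_cast
    ring
  · rw [Complex.star_def, ← Complex.exp_conj]
    congr 1
    simp only [map_div₀, _root_.map_mul, map_neg, map_ofNat, Complex.conj_I, Complex.conj_ofReal,
      Complex.conj_natCast]
    ring

lemma findvd {N : ℕ} (j j' : Fin N) :
    ((N:ℤ) ∣ ((j:ℕ):ℤ) - ((j':ℕ):ℤ)) ↔ j = j' := by
  constructor
  · intro h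
    have h1 : ((j:ℕ):ℤ) < N := by exact_mod_cast j.isLt
    have h2 : ((j':ℕ):ℤ) < N := by exact_mod_cast j'.isLt
    have h3 : (0:ℤ) ≤ ((j:ℕ):ℤ) := by positivity
    have h4 : (0:ℤ) ≤ ((j':ℕ):ℤ) := by positivity
    have h5 := Int.eq_zero_of_abs_lt_dvd h (abs_sub_lt_iff.2 ⟨by omega, by omega⟩)
    have : ((j:ℕ):ℤ) = ((j':ℕ):ℤ) := by omega
    exact Fin.ext (by exact_mod_cast this)
  · rintro rfl; simp

lemma moddvd {m : ℕ} (p : ℕ) (q : Fin m) :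
    ((m:ℤ) ∣ ((q:ℕ):ℤ) - (p:ℤ)) ↔ p % m = (q:ℕ) := by
  have h1 : ((q:ℕ):ℤ) % m = ((q:ℕ):ℤ) := Int.emod_eq_of_lt (by positivity) (by exact_mod_cast q.isLt)
  constructor
  · intro h
    have h2 : (p:ℤ) ≡ ((q:ℕ):ℤ) [ZMOD (m:ℤ)] := Int.modEq_iff_dvd.mpr h
    have h3 : (p:ℤ) % m = ((q:ℕ):ℤ) % m := h2
    rw [h1, ← Int.natCast_mod] at h3
    exact_mod_cast h3
  · intro h
    refine Int.ModEq.dvd (?_ : ((p:ℤ)) ≡ _ [ZMOD (m:ℤ)])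
    show (p:ℤ) % m = ((q:ℕ):ℤ) % m
    rw [h1, ← Int.natCast_mod, h]

lemma expAlias {s m d : ℕ} (hs : 0 < s) (hm : 0 < m) (hd : d = s * m) (p : ℕ) (a b : ℕ) :
    Complex.exp (2 * (Real.pi:ℂ) * Complex.I * ((((a*s:ℕ):ℤ) - ((b*s:ℕ):ℤ) : ℤ):ℂ) * ((p:ℕ):ℂ) / (d:ℂ))
    = Complex.exp (2 * (Real.pi:ℂ) * Complex.I * ((((a:ℕ):ℤ) - ((b:ℕ):ℤ) : ℤ):ℂ) * (((p:ℕ) % m : ℕ):ℂ) / (m:ℂ)) := by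
  have hsC : (s:ℂ) ≠ 0 := Nat.cast_ne_zero.mpr hs.ne'
  have hmC : (m:ℂ) ≠ 0 := Nat.cast_ne_zero.mpr hm.ne'
  have hdC : (d:ℂ) = (s:ℂ) * (m:ℂ) := by rw [hd]; push_cast; ring
  set k := p / m with hkdef
  set e := p % m with hedef
  have hp : (p:ℕ) = m * k + e := (Nat.div_add_mod p m).symm
  have key : 2 * (Real.pi:ℂ) * Complex.I * ((((a*s:ℕ):ℤ) - ((b*s:ℕ):ℤ) : ℤ):ℂ) * ((p:ℕ):ℂ) / (d:ℂ)
      = ((((a:ℤ) - (b:ℤ)) * (k:ℕ) : ℤ):ℂ) * (2 * (Real.pi:ℂ) * Complex.I)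
        + 2 * (Real.pi:ℂ) * Complex.I * ((((a:ℕ):ℤ) - ((b:ℕ):ℤ) : ℤ):ℂ) * ((e:ℕ):ℂ) / (m:ℂ) := by
    rw [hdC]
    rw [show ((p:ℕ):ℂ) = (m:ℂ) * ((k:ℕ):ℂ) + ((e:ℕ):ℂ) by exact_mod_cast congrArg (Nat.cast (R := ℂ)) hp]
    push_cast
    field_simp
  rw [key, Complex.exp_add, Complex.exp_int_mul_two_pi_mul_I, one_mul]
theorem super_resolution_guidance {s m d : ℕ} (hs : 0 < s) (hm : 0 < m) (hd : d = s * m)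
    (Fd : Matrix (Fin d) (Fin d) ℂ)
    (hFd : ∀ j k, Fd j k =
      Complex.exp (-(2 * (Real.pi : ℂ) * Complex.I) * ((j : ℕ) : ℂ) * ((k : ℕ) : ℂ) / (d : ℂ)))
    (Fm : Matrix (Fin m) (Fin m) ℂ)
    (hFm : ∀ j k, Fm j k =
      Complex.exp (-(2 * (Real.pi : ℂ) * Complex.I) * ((j : ℕ) : ℂ) * ((k : ℕ) : ℂ) / (m : ℂ)))
    (P : Matrix (Fin m) (Fin d) ℂ)
    (hP : ∀ n j, P n j = if (j : ℕ) = (n : ℕ) * s then 1 else 0)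
    (khat : Fin d → ℂ)
    (A : Matrix (Fin m) (Fin d) ℂ) (hA : A = P * Fd⁻¹ * Matrix.diagonal khat * Fd)
    (σ r : ℝ) (hσ : 0 < σ) :
    IsUnit ((σ ^ 2 : ℂ) • (1 : Matrix (Fin m) (Fin m) ℂ) + (r ^ 2 : ℂ) • (A * Aᴴ)) ∧
    ∀ (u : Fin m → ℂ) (v : Fin d → ℂ),
      v = Aᴴ.mulVec ((((σ ^ 2 : ℂ) • (1 : Matrix (Fin m) (Fin m) ℂ)
            + (r ^ 2 : ℂ) • (A * Aᴴ))⁻¹).mulVec u) →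
      ∀ (l : Fin d) (n : Fin m) (j : Fin s), (l : ℕ) = (n : ℕ) + (j : ℕ) * m →
        Fd.mulVec v l
          = star (khat l) * Fm.mulVec u n /
            ((σ ^ 2 : ℂ) + ((r ^ 2 / s : ℝ) : ℂ) *
              ∑ p : Fin d, if (p : ℕ) % m = (n : ℕ) then ((‖khat p‖ ^ 2 : ℝ) : ℂ) else 0) := by
  have hd0 : 0 < d := hd ▸ Nat.mul_pos hs hm
  have hdC : (d:ℂ) ≠ 0 := Nat.cast_ne_zero.mpr hd0.ne'
  have hmC : (m:ℂ) ≠ 0 := Nat.cast_ne_zero.mpr hm.ne'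
  have hsC : (s:ℂ) ≠ 0 := Nat.cast_ne_zero.mpr hs.ne'
  have hnslt : ∀ n : Fin m, (n:ℕ) * s < d := fun n => by
    calc (n:ℕ) * s < m * s := (Nat.mul_lt_mul_right hs).mpr n.isLt
    _ = d := by rw [hd, Nat.mul_comm]
  have hpmlt : ∀ p : Fin d, (p:ℕ) % m < m := fun p => Nat.mod_lt _ hm
  -- orthogonality relations
  have F1 : Fd * Fdᴴ = (d:ℂ) • 1 := by
    ext a b
    rw [mul_apply]
    have h1 : ∀ k : Fin d, Fd a k * (Fdᴴ) k b = star (Fd k b) * Fd k a := fun k => by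
      rw [conjTranspose_apply, dftSym hFd a k, dftSym hFd b k]; ring
    simp_rw [h1, dftConjMul hFd]
    rw [charSum hd0]
    simp only [findvd]
    by_cases h : a = b <;> simp [h, Matrix.one_apply, eq_comm]
  have F2 : Fm * Fmᴴ = (m:ℂ) • 1 := by
    ext a b
    rw [mul_apply]
    have h1 : ∀ k : Fin m, Fm a k * (Fmᴴ) k b = star (Fm k b) * Fm k a := fun k => by
      rw [conjTranspose_apply, dftSym hFm a k, dftSym hFm b k]; ring
    simp_rw [h1, dftConjMul hFm]
    rw [charSum hm]
    simp only [findvd]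
    by_cases h : a = b <;> simp [h, Matrix.one_apply, eq_comm]
  have F3 : Fmᴴ * Fm = (m:ℂ) • 1 := by
    ext a b
    rw [mul_apply]
    simp_rw [conjTranspose_apply, dftConjMul hFm]
    rw [charSum hm]
    simp only [findvd]
    by_cases h : a = b <;> simp [h, Matrix.one_apply, eq_comm]
  have F4 : Fd⁻¹ = (d:ℂ)⁻¹ • Fdᴴ := by
    apply inv_eq_right_inv
    rw [Matrix.mul_smul, F1, smul_smul, inv_mul_cancel₀ hdC, one_smul]
  set w : Fin d → ℂ := fun p => ((‖khat p‖^2 : ℝ):ℂ) with hw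
  set c : Fin m → ℂ := fun q => (σ^2:ℂ) + ((r^2/s : ℝ):ℂ)
      * ∑ p : Fin d, if (p:ℕ)%m = (q:ℕ) then w p else 0 with hc
  have hcR : ∀ q, c q = ((σ^2 + (r^2/s)
      * ∑ p : Fin d, if (p:ℕ)%m = (q:ℕ) then ‖khat p‖^2 else 0 : ℝ) : ℂ) := by
    intro q
    rw [hc, hw]
    push_cast [apply_ite (Complex.ofReal)]
    norm_num
  have hcne : ∀ q, c q ≠ 0 := by
    intro q
    rw [hcR]
    rw [Complex.ofReal_ne_zero]
    have h2 : (0:ℝ) ≤ (r^2/s) * ∑ p : Fin d, if (p:ℕ)%m = (q:ℕ) then ‖khat p‖^2 else 0 :=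
      mul_nonneg (by positivity) (Finset.sum_nonneg fun p _ => by split <;> positivity)
    positivity
  -- P extraction lemmas
  have hPmul : ∀ (ι : Type) (X : Matrix (Fin d) ι ℂ) (a : Fin m) (b : ι),
      (P * X) a b = X ⟨(a:ℕ)*s, hnslt a⟩ b := by
    intro ι X a b
    rw [mul_apply]
    rw [Finset.sum_eq_single (⟨(a:ℕ)*s, hnslt a⟩ : Fin d)]
    · rw [hP]; simp
    · intro j _ hj
      rw [hP, if_neg, zero_mul]
      exact fun hv => hj (Fin.ext (by simpa using hv))
    · exact fun h => absurd (Finset.mem_univ _) h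
  have hPTmul : ∀ (ι : Type) (X : Matrix ι (Fin d) ℂ) (a : ι) (b : Fin m),
      (X * Pᴴ) a b = X a ⟨(b:ℕ)*s, hnslt b⟩ := by
    intro ι X a b
    rw [mul_apply]
    rw [Finset.sum_eq_single (⟨(b:ℕ)*s, hnslt b⟩ : Fin d)]
    · rw [conjTranspose_apply, hP]; simp
    · intro j _ hj
      rw [conjTranspose_apply, hP, if_neg, star_zero, mul_zero]
      exact fun hv => hj (Fin.ext (by simpa using hv))
    · exact fun h => absurd (Finset.mem_univ _) h
  have hzsq : ∀ z : ℂ, z * star z = ((‖z‖^2 : ℝ):ℂ) := by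
    intro z
    rw [Complex.star_def, Complex.mul_conj]
    norm_cast
    rw [Complex.normSq_eq_norm_sq]
  have hDD : Matrix.diagonal khat * Matrix.diagonal (star khat) = Matrix.diagonal w := by
    have hps : (fun i => khat i * star khat i) = w := funext fun p => hzsq (khat p)
    rw [diagonal_mul_diagonal, hps]
  have F5 : A * Aᴴ = (d:ℂ)⁻¹ • (P * ((Fdᴴ * Matrix.diagonal w * Fd) * Pᴴ)) := by
    rw [hA, F4]
    simp only [conjTranspose_mul, Matrix.conjTranspose_smul, Matrix.conjTranspose_conjTranspose,
      diagonal_conjTranspose, star_inv₀, star_natCast]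
    simp only [Matrix.smul_mul, Matrix.mul_smul, smul_smul, Matrix.mul_assoc]
    rw [show Fd * (Fdᴴ * (Matrix.diagonal (star khat) * (Fd * Pᴴ)))
        = (d:ℂ) • (Matrix.diagonal (star khat) * (Fd * Pᴴ)) from by
      rw [← Matrix.mul_assoc, F1, Matrix.smul_mul, Matrix.one_mul]]
    simp only [Matrix.mul_smul, smul_smul]
    rw [show Matrix.diagonal khat * (Matrix.diagonal (star khat) * (Fd * Pᴴ))
        = Matrix.diagonal w * (Fd * Pᴴ) from by rw [← Matrix.mul_assoc, hDD]]
    congr 1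
    field_simp
  set M := (σ^2:ℂ) • (1 : Matrix (Fin m) (Fin m) ℂ) + (r^2:ℂ) • (A * Aᴴ) with hM
  have F6 : M = (m:ℂ)⁻¹ • (Fmᴴ * Matrix.diagonal c * Fm) := by
    have hdC' : (d:ℂ) = (s:ℂ) * m := by rw [hd]; push_cast; ring
    rw [hM, F5]
    ext a b
    simp only [Matrix.add_apply, Matrix.smul_apply, Matrix.one_apply, smul_eq_mul]
    rw [hPmul, hPTmul]
    have hZ : (Fdᴴ * Matrix.diagonal w * Fd) ⟨(a:ℕ)*s, hnslt a⟩ ⟨(b:ℕ)*s, hnslt b⟩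
        = ∑ p : Fin d, Complex.exp (2 * (Real.pi:ℂ) * Complex.I
            * ((((a:ℕ):ℤ) - ((b:ℕ):ℤ) : ℤ):ℂ) * (((p:ℕ) % m : ℕ):ℂ) / (m:ℂ)) * w p := by
      rw [Matrix.mul_apply]
      refine Finset.sum_congr rfl fun p _ => ?_
      rw [Matrix.mul_diagonal, mul_right_comm, Matrix.conjTranspose_apply, dftConjMul hFd]
      congr 1
      exact expAlias hs hm hd (p:ℕ) (a:ℕ) (b:ℕ)
    rw [hZ]
    have hR : (Fmᴴ * Matrix.diagonal c * Fm) a b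
        = (σ^2:ℂ) * (if a = b then (m:ℂ) else 0)
          + ((r^2/s : ℝ):ℂ) * ∑ p : Fin d, Complex.exp (2 * (Real.pi:ℂ) * Complex.I
            * ((((a:ℕ):ℤ) - ((b:ℕ):ℤ) : ℤ):ℂ) * (((p:ℕ) % m : ℕ):ℂ) / (m:ℂ)) * w p := by
      rw [Matrix.mul_apply]
      have hterm : ∀ q : Fin m, (Fmᴴ * Matrix.diagonal c) a q * Fm q b
          = (σ^2:ℂ) * (star (Fm q a) * Fm q b)
            + ((r^2/s : ℝ):ℂ) * ∑ p : Fin d,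
                (if (p:ℕ)%m = (q:ℕ) then (star (Fm q a) * Fm q b) * w p else 0) := by
        intro q
        rw [Matrix.mul_diagonal, Matrix.conjTranspose_apply, hc]
        have hS : ∀ E : ℂ, (∑ p : Fin d, if (p:ℕ)%m = (q:ℕ) then E * w p else 0)
            = E * ∑ p : Fin d, (if (p:ℕ)%m = (q:ℕ) then w p else 0) := by
          intro E
          rw [Finset.mul_sum]
          refine Finset.sum_congr rfl fun p _ => ?_
          rw [mul_ite, mul_zero]
        rw [hS]
        ring
      rw [Finset.sum_congr rfl fun q _ => hterm q, Finset.sum_add_distrib]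
      congr 1
      · rw [← Finset.mul_sum]
        congr 1
        simp_rw [dftConjMul hFm]
        rw [charSum hm]
        simp only [findvd]
      · rw [← Finset.mul_sum]
        congr 1
        rw [Finset.sum_comm]
        refine Finset.sum_congr rfl fun p _ => ?_
        rw [Finset.sum_eq_single (⟨(p:ℕ)%m, hpmlt p⟩ : Fin m)]
        · rw [if_pos rfl, dftConjMul hFm]
        · intro q _ hq
          rw [if_neg]
          exact fun hv => hq (Fin.ext (by simpa using hv.symm))
        · exact fun h => absurd (Finset.mem_univ _) h
    rw [hR]
    have hρ : ((r^2/s : ℝ):ℂ) = (r:ℂ)^2/(s:ℂ) := by push_cast; ring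
    rw [hρ, hdC']
    by_cases h : a = b
    · rw [if_pos h, if_pos h]
      field_simp
    · rw [if_neg h, if_neg h]
      field_simp
      ring
  set B := ((m:ℂ)⁻¹ • (Fmᴴ * Matrix.diagonal (fun q => (c q)⁻¹))) * Fm with hB
  have hMB : M * B = 1 := by
    have hDc : Matrix.diagonal c * Matrix.diagonal (fun q => (c q)⁻¹) = 1 := by
      rw [diagonal_mul_diagonal]
      rw [show (fun i => c i * (c i)⁻¹) = fun _ => (1:ℂ) from funext fun i => mul_inv_cancel₀ (hcne i)]
      exact Matrix.diagonal_one
    rw [F6, hB]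
    simp only [Matrix.smul_mul, Matrix.mul_smul, smul_smul, Matrix.mul_assoc]
    rw [show Fm * (Fmᴴ * (Matrix.diagonal (fun q => (c q)⁻¹) * Fm))
        = (m:ℂ) • (Matrix.diagonal (fun q => (c q)⁻¹) * Fm) from by
      rw [← Matrix.mul_assoc, F2, Matrix.smul_mul, Matrix.one_mul]]
    simp only [Matrix.mul_smul, smul_smul]
    rw [show Matrix.diagonal c * (Matrix.diagonal (fun q => (c q)⁻¹) * Fm) = Fm from by
      rw [← Matrix.mul_assoc, hDc, Matrix.one_mul]]
    rw [F3, smul_smul]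
    rw [show (m:ℂ)⁻¹ * (m:ℂ)⁻¹ * (m:ℂ) * (m:ℂ) = 1 from by field_simp]
    rw [one_smul]
  have hBM : B * M = 1 := mul_eq_one_comm.mp hMB
  have hUnit : IsUnit M := ⟨⟨M, B, hMB, hBM⟩, rfl⟩
  refine ⟨hUnit, ?_⟩
  intro u v hv l n j hl
  have hMinv : M⁻¹ = B := Matrix.inv_eq_right_inv hMB
  have hFA : Fd * Aᴴ = Matrix.diagonal (star khat) * (Fd * Pᴴ) := by
    rw [hA, F4]
    simp only [conjTranspose_mul, Matrix.conjTranspose_smul, Matrix.conjTranspose_conjTranspose,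
      diagonal_conjTranspose, star_inv₀, star_natCast]
    simp only [Matrix.smul_mul, Matrix.mul_smul, smul_smul, Matrix.mul_assoc]
    rw [show Fd * (Fdᴴ * (Matrix.diagonal (star khat) * (Fd * Pᴴ)))
        = (d:ℂ) • (Matrix.diagonal (star khat) * (Fd * Pᴴ)) from by
      rw [← Matrix.mul_assoc, F1, Matrix.smul_mul, Matrix.one_mul]]
    rw [smul_smul, inv_mul_cancel₀ hdC, one_smul]
  have F9 : (Fd * Pᴴ) * Fmᴴ
      = (m:ℂ) • Matrix.of (fun (p : Fin d) (q : Fin m) =>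
          if (p:ℕ) % m = (q:ℕ) then (1:ℂ) else 0) := by
    have hdC' : (d:ℂ) = (s:ℂ) * m := by rw [hd]; push_cast; ring
    ext p q
    rw [mul_apply]
    have h1 : ∀ n' : Fin m, (Fd * Pᴴ) p n' * (Fmᴴ) n' q
        = Complex.exp (2 * (Real.pi:ℂ) * Complex.I
            * ((((q:ℕ):ℤ) - ((p:ℕ):ℤ) : ℤ):ℂ) * ((n':ℕ):ℂ) / (m:ℂ)) := by
      intro n'
      rw [hPTmul, conjTranspose_apply, hFd, hFm]
      rw [show (star (Complex.exp (-(2 * (Real.pi : ℂ) * Complex.I) * ((q:ℕ):ℂ) * ((n':ℕ):ℂ) / (m:ℂ))) : ℂ)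
          = Complex.exp (2 * (Real.pi : ℂ) * Complex.I * ((q:ℕ):ℂ) * ((n':ℕ):ℂ) / (m:ℂ)) from ?_]
      · rw [← Complex.exp_add]
        congr 1
        have hval : (((⟨(n':ℕ)*s, hnslt n'⟩ : Fin d) : ℕ) : ℂ) = ((n':ℕ):ℂ) * (s:ℂ) := by
          push_cast; rfl
        rw [hval, hdC']
        push_cast
        field_simp
        ring
      · rw [Complex.star_def, ← Complex.exp_conj]
        congr 1
        simp only [map_div₀, _root_.map_mul, map_neg, map_ofNat, Complex.conj_I,
          Complex.conj_ofReal, Complex.conj_natCast]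
        ring
    rw [Finset.sum_congr rfl fun n' _ => h1 n']
    rw [charSum hm (((q:ℕ):ℤ) - ((p:ℕ):ℤ))]
    simp only [moddvd]
    simp [Matrix.smul_apply, Matrix.of_apply, mul_ite, mul_one, mul_zero]
  have hRmat : (Matrix.diagonal (star khat) * (Fd * Pᴴ))
        * ((m:ℂ)⁻¹ • (Fmᴴ * Matrix.diagonal (fun q => (c q)⁻¹)))
      = Matrix.of (fun (p : Fin d) (q : Fin m) =>
          if (p:ℕ) % m = (q:ℕ) then star (khat p) * (c q)⁻¹ else 0) := by
    rw [Matrix.mul_smul]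
    rw [show (Matrix.diagonal (star khat) * (Fd * Pᴴ)) * (Fmᴴ * Matrix.diagonal (fun q => (c q)⁻¹))
        = Matrix.diagonal (star khat) * ((((Fd * Pᴴ) * Fmᴴ)) * Matrix.diagonal (fun q => (c q)⁻¹)) from by
      simp only [Matrix.mul_assoc]]
    rw [F9, Matrix.smul_mul, Matrix.mul_smul, smul_smul, inv_mul_cancel₀ hmC, one_smul]
    ext p q
    rw [Matrix.diagonal_mul, Matrix.mul_diagonal]
    simp [Matrix.of_apply, ite_mul, zero_mul, one_mul, Pi.star_apply]
  have hlm : (l:ℕ) % m = (n:ℕ) := by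
    rw [hl, Nat.add_mul_mod_self_right, Nat.mod_eq_of_lt n.isLt]
  have hfinal : Fd.mulVec v l = star (khat l) * ((c n)⁻¹ * Fm.mulVec u n) := by
    rw [hv, hMinv, hB]
    rw [Matrix.mulVec_mulVec, Matrix.mulVec_mulVec]
    rw [hFA]
    rw [show (Matrix.diagonal (star khat) * (Fd * Pᴴ))
          * (((m:ℂ)⁻¹ • (Fmᴴ * Matrix.diagonal fun q => (c q)⁻¹)) * Fm)
        = ((Matrix.diagonal (star khat) * (Fd * Pᴴ))
          * ((m:ℂ)⁻¹ • (Fmᴴ * Matrix.diagonal fun q => (c q)⁻¹))) * Fm from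
      (Matrix.mul_assoc _ _ _).symm]
    rw [hRmat]
    rw [← Matrix.mulVec_mulVec]
    rw [Matrix.mulVec, dotProduct]
    rw [Finset.sum_eq_single n]
    · rw [Matrix.of_apply, if_pos hlm]
      ring
    · intro q _ hq
      rw [Matrix.of_apply, if_neg, zero_mul]
      rw [hlm]
      exact fun hv' => hq (Fin.ext hv'.symm)
    · exact fun h => absurd (Finset.mem_univ _) h
  rw [hfinal]
  rw [div_eq_mul_inv]
  rw [show ((σ ^ 2 : ℂ) + ((r ^ 2 / s : ℝ) : ℂ) *
      ∑ p : Fin d, if (p : ℕ) % m = (n : ℕ) then ((‖khat p‖ ^ 2 : ℝ) : ℂ) else 0) = c n by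
    simp only [hc, hw]]
  ring
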